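/- In GL_2 cocharacter language: the G_m-equivariant rank-2 vector bundles on standard chains (with trivial weights at both endpoints) that are Σ-stable for the Kausz fan of GL_2 are exactly, up to isomorphism: O⊕O on C_0; O(−1,1)⊕O(−1,1), O(1,−1)⊕O(1,−1), O(0,0)⊕O(−1,1), O(1,−1)⊕O(0,0) on C_1; and O(1,−1,0)⊕O(0,−1,1), O(−1,1,0)⊕O(−1,0,1), O(1,0,−1)⊕O(0,1,−1) on C_2 — equivalently, exactly the bundles E ≅ O(v_1−v_0) ⊕ O(v_2−v_0) where v_0, v_1, v_2 are standard basis vectors of Z^{n+1}, each appearing at least once, up to the GL_2 Weyl group action. -/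

import Mathlib

/-!
STATEMENT 14: Classification of the Σ-stable bundle chains for the Kausz fan of
`GL₂`, in cocharacter language.

A `𝔾ₘ`-equivariant rank-2 split vector bundle on the standard chain `C_n` with
trivial weights at both endpoints is `O(d¹) ⊕ O(d²)` with multidegrees
`d¹, d² : Fin (n+1) → ℤ` of total degree `0` on each summand.  Its splitting type is
the sequence of cocharacters at the nodes, the node `m` cocharacter being the pair
of weights `(-∑_{c ≤ m} d¹ c, -∑_{c ≤ m} d² c) ∈ ℤ²` (weights being trivial at `p₊`
and dropping by the degree across each component).

The Kausz fan `Σ` for `GL₂` is the part of the fan of Weyl chambers of `PGL₃` lying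
in the positive Weyl chamber `{a₁ ≥ a₂}` of `GL₂`: three contiguous cones with the
four rays `(1,1), (1,0), (0,-1), (-1,-1)` (primitive generators); we order the rays
as `β₁ = (1,1), β₂ = (0,-1), β₃ = (1,0), β₄ = (-1,-1)`, with the cones
`⟨(1,1),(1,0)⟩, ⟨(0,-1),(1,0)⟩, ⟨(0,-1),(-1,-1)⟩` and their faces.  The bundle is
Σ-stable iff its node cocharacter sequence is, for a single element `w` of the
`GL₂` Weyl group (`w` is the identity or the swap of the two coordinates), the
`w`-image of an order-respecting subsequence of the rays of one cone of `Σ`.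

The theorem: the Σ-stable bundles are exactly those isomorphic to
`O(v₁ - v₀) ⊕ O(v₂ - v₀)` with `v₀, v₁, v₂` standard basis vectors of `ℤ^{n+1}`,
each appearing at least once, up to the Weyl action (interchange of the two
summands); equivalently, exactly the bundles `O ⊕ O` on `C₀`;
`O(-1,1)⊕O(-1,1)`, `O(1,-1)⊕O(1,-1)`, `O(0,0)⊕O(-1,1)`, `O(1,-1)⊕O(0,0)` on `C₁`;
and `O(1,-1,0)⊕O(0,-1,1)`, `O(-1,1,0)⊕O(-1,0,1)`, `O(1,0,-1)⊕O(0,1,-1)` on `C₂`.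
-/

/-- The ordered ray generators of the Kausz fan of `GL₂`. -/
def kauszRay : Fin 4 → ℤ × ℤ := ![(1, 1), (0, -1), (1, 0), (-1, -1)]

/-- The cones of the Kausz fan of `GL₂`, as sets of ray indices (the three
two-dimensional cones and all their faces). -/
def KauszCone (S : Finset (Fin 4)) : Prop :=
  S ⊆ {0, 2} ∨ S ⊆ {1, 2} ∨ S ⊆ {1, 3}

/-- The `GL₂` Weyl group action on cocharacters: `w = true` is the transposition. -/
def weylSwap (w : Bool) (p : ℤ × ℤ) : ℤ × ℤ := if w then (p.2, p.1) else p

/-- The cocharacter of the split bundle `O(d¹) ⊕ O(d²)` at the `m`-th node: the pair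
of `𝔾ₘ`-weights there, `-∑_{c ≤ m} d c` for each summand. -/
def nodeCochar {n : ℕ} (d1 d2 : Fin (n + 1) → ℤ) (m : Fin n) : ℤ × ℤ :=
  (-(∑ c : Fin (n + 1), if (c : ℕ) ≤ (m : ℕ) then d1 c else 0),
   -(∑ c : Fin (n + 1), if (c : ℕ) ≤ (m : ℕ) then d2 c else 0))

/-- Σ-stability for the Kausz fan of `GL₂`: the node cocharacter sequence is the
image, under a single Weyl element, of an order-respecting subsequence of the rays
of one cone. -/
def KauszStable {n : ℕ} (d1 d2 : Fin (n + 1) → ℤ) : Prop :=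
  ∃ (w : Bool) (S : Finset (Fin 4)), KauszCone S ∧
    ∃ φ : Fin n → Fin 4, StrictMono φ ∧ (∀ m, φ m ∈ S) ∧
      ∀ m : Fin n, nodeCochar d1 d2 m = weylSwap w (kauszRay (φ m))

section AuxKausz
instance {n m : ℕ} (f : Fin n → Fin m) : Decidable (StrictMono f) :=
  decidable_of_iff (∀ a b : Fin n, a < b → f a < f b) Iff.rfl

instance (S : Finset (Fin 4)) : Decidable (KauszCone S) := by
  unfold KauszCone; infer_instance

instance {n : ℕ} (d1 d2 : Fin (n + 1) → ℤ) : Decidable (KauszStable d1 d2) := by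
  unfold KauszStable; infer_instance

lemma node10 (d1 d2 : Fin 2 → ℤ) : nodeCochar d1 d2 0 = (-(d1 0), -(d2 0)) := by
  simp [nodeCochar, Fin.sum_univ_two]

lemma node20 (d1 d2 : Fin 3 → ℤ) : nodeCochar d1 d2 0 = (-(d1 0), -(d2 0)) := by
  simp [nodeCochar, Fin.sum_univ_three]

lemma node21 (d1 d2 : Fin 3 → ℤ) :
    nodeCochar d1 d2 1 = (-(d1 0 + d1 1), -(d2 0 + d2 1)) := by
  simp [nodeCochar, Fin.sum_univ_three]

lemma fin2cases (x : Fin 2) : x = 0 ∨ x = 1 := by omega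
lemma fin3cases (x : Fin 3) : x = 0 ∨ x = 1 ∨ x = 2 := by omega
lemma fin4cases (x : Fin 4) : x = 0 ∨ x = 1 ∨ x = 2 ∨ x = 3 := by omega

lemma pin2 (d : Fin 2 → ℤ) (a : ℤ) (h : d 0 + d 1 = 0) (ha : d 0 = a) :
    d = ![a, -a] := by
  funext c
  rcases (by omega : c = 0 ∨ c = 1) with rfl | rfl <;> simp <;> omega

lemma pin3 (d : Fin 3 → ℤ) (a b : ℤ) (h : d 0 + d 1 + d 2 = 0) (ha : d 0 = a)
    (hab : d 0 + d 1 = b) : d = ![a, b - a, -b] := by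
  funext c
  rcases (by omega : c = 0 ∨ c = 1 ∨ c = 2) with rfl | rfl | rfl <;> simp <;> omega

end AuxKausz

theorem kausz_stable_bundles_classified {n : ℕ} (d1 d2 : Fin (n + 1) → ℤ)
    (h1 : ∑ c, d1 c = 0) (h2 : ∑ c, d2 c = 0) :
    KauszStable d1 d2 ↔
      ∃ v : Fin 3 → Fin (n + 1), Function.Surjective v ∧
        ((d1 = (fun c => (if c = v 1 then 1 else 0) - (if c = v 0 then 1 else 0)) ∧
          d2 = (fun c => (if c = v 2 then 1 else 0) - (if c = v 0 then 1 else 0))) ∨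
         (d1 = (fun c => (if c = v 2 then 1 else 0) - (if c = v 0 then 1 else 0)) ∧
          d2 = (fun c => (if c = v 1 then 1 else 0) - (if c = v 0 then 1 else 0)))) := by
  rcases n with _ | _ | _ | n
  · -- n = 0
    constructor
    · intro _
      have e1 : d1 0 = 0 := by simpa using h1
      have e2 : d2 0 = 0 := by simpa using h2
      refine ⟨fun _ => 0, fun b => ⟨0, by omega⟩, Or.inl ⟨?_, ?_⟩⟩ <;>
        · funext c
          have hc : c = 0 := by omega
          subst hc
          simp [e1, e2]
    · intro _
      exact ⟨false, ∅, Or.inl (Finset.empty_subset _), Fin.elim0,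
        fun a b h => a.elim0, fun m => m.elim0, fun m => m.elim0⟩
  · -- n = 1
    rw [Fin.sum_univ_two] at h1 h2
    constructor
    · rintro ⟨w, S, hS, φ, hmono, hmem, heq⟩
      have h := heq 0
      rw [node10] at h
      rcases w with _ | _ <;>
        rcases fin4cases (φ 0) with h4 | h4 | h4 | h4 <;>
        rw [h4] at h <;>
        simp [weylSwap, kauszRay, Prod.ext_iff] at h <;>
        first
        | (rw [pin2 d1 (-1) h1 (by omega), pin2 d2 (-1) h2 (by omega)]; decide)
        | (rw [pin2 d1 1 h1 (by omega), pin2 d2 1 h2 (by omega)]; decide)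
        | (rw [pin2 d1 0 h1 (by omega), pin2 d2 1 h2 (by omega)]; decide)
        | (rw [pin2 d1 0 h1 (by omega), pin2 d2 (-1) h2 (by omega)]; decide)
        | (rw [pin2 d1 1 h1 (by omega), pin2 d2 0 h2 (by omega)]; decide)
        | (rw [pin2 d1 (-1) h1 (by omega), pin2 d2 0 h2 (by omega)]; decide)
    · rintro ⟨v, hs, hd⟩
      rcases hd with ⟨hd1, hd2⟩ | ⟨hd1, hd2⟩ <;>
        rcases fin2cases (v 0) with hv0 | hv0 <;>
        rcases fin2cases (v 1) with hv1 | hv1 <;>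
        rcases fin2cases (v 2) with hv2 | hv2 <;>
        simp only [hv0, hv1, hv2] at hd1 hd2 <;>
        subst hd1 <;> subst hd2 <;>
        first
        | decide
        | (exfalso; obtain ⟨a, ha⟩ := hs 0; rcases fin3cases a with rfl | rfl | rfl <;>
             simp only [hv0, hv1, hv2] at ha <;> exact absurd ha (by decide))
        | (exfalso; obtain ⟨a, ha⟩ := hs 1; rcases fin3cases a with rfl | rfl | rfl <;>
             simp only [hv0, hv1, hv2] at ha <;> exact absurd ha (by decide))
  · -- n = 2
    rw [Fin.sum_univ_three] at h1 h2
    constructor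
    · rintro ⟨w, S, hS, φ, hmono, hmem, heq⟩
      have hlt : φ 0 < φ 1 := hmono (by decide)
      have k0 := heq 0
      have k1 := heq 1
      rw [node20] at k0
      rw [node21] at k1
      have c0 := hmem 0
      have c1 := hmem 1
      rcases w with _ | _ <;> rcases hS with hS | hS | hS <;>
        (have e0 := hS c0
         have e1 := hS c1
         simp only [Finset.mem_insert, Finset.mem_singleton] at e0 e1
         rcases e0 with e0 | e0 <;> rcases e1 with e1 | e1 <;>
           rw [e0] at k0 <;> rw [e1] at k1 <;> rw [e0, e1] at hlt <;>
           first
           | exact absurd hlt (by decide)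
           | (simp [weylSwap, kauszRay, Prod.ext_iff] at k0 k1
              first
              | (rw [pin3 d1 (-1) (-1) h1 (by omega) (by omega),
                     pin3 d2 (-1) 0 h2 (by omega) (by omega)]; decide)
              | (rw [pin3 d1 0 (-1) h1 (by omega) (by omega),
                     pin3 d2 1 0 h2 (by omega) (by omega)]; decide)
              | (rw [pin3 d1 0 1 h1 (by omega) (by omega),
                     pin3 d2 1 1 h2 (by omega) (by omega)]; decide)
              | (rw [pin3 d1 (-1) 0 h1 (by omega) (by omega),
                     pin3 d2 (-1) (-1) h2 (by omega) (by omega)]; decide)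
              | (rw [pin3 d1 1 0 h1 (by omega) (by omega),
                     pin3 d2 0 (-1) h2 (by omega) (by omega)]; decide)
              | (rw [pin3 d1 1 1 h1 (by omega) (by omega),
                     pin3 d2 0 1 h2 (by omega) (by omega)]; decide)))
    · rintro ⟨v, hs, hd⟩
      rcases hd with ⟨hd1, hd2⟩ | ⟨hd1, hd2⟩ <;>
        rcases fin3cases (v 0) with hv0 | hv0 | hv0 <;>
        rcases fin3cases (v 1) with hv1 | hv1 | hv1 <;>
        rcases fin3cases (v 2) with hv2 | hv2 | hv2 <;>
        simp only [hv0, hv1, hv2] at hd1 hd2 <;>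
        subst hd1 <;> subst hd2 <;>
        first
        | decide
        | (exfalso; obtain ⟨a, ha⟩ := hs 0; rcases fin3cases a with rfl | rfl | rfl <;>
             simp only [hv0, hv1, hv2] at ha <;> exact absurd ha (by decide))
        | (exfalso; obtain ⟨a, ha⟩ := hs 1; rcases fin3cases a with rfl | rfl | rfl <;>
             simp only [hv0, hv1, hv2] at ha <;> exact absurd ha (by decide))
        | (exfalso; obtain ⟨a, ha⟩ := hs 2; rcases fin3cases a with rfl | rfl | rfl <;>
             simp only [hv0, hv1, hv2] at ha <;> exact absurd ha (by decide))
  · -- n ≥ 3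
    constructor
    · rintro ⟨w, S, hS, φ, hmono, hmem, heq⟩
      have hcard : S.card ≤ 2 := by
        rcases hS with h | h | h <;> exact (Finset.card_le_card h).trans (by decide)
      have hbig : (Finset.univ : Finset (Fin (n + 3))).card ≤ S.card :=
        Finset.card_le_card_of_injOn φ (fun m _ => hmem m) hmono.injective.injOn
      simp at hbig
      exact absurd hbig (by omega)
    · rintro ⟨v, hs, -⟩
      have := Fintype.card_le_of_surjective v hs
      simp at this
      omega
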